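/- arXiv:2405.19172 — 4 statements merged into one kernel-verified Lean document; each statement's English description precedes it below -/
import Mathlib

section
/- For a simple graph G on n ≥ 2 vertices with cc(G) connected components and integer t ≥ 1, the generalized Sierpiński gasket graph S[G,t] has exactly (n^t (cc(G) − 1) + n − cc(G)) / (n − 1) connected components. -/
variable {V : Type*}

/-- Adjacency of the generalized Sierpiński graph `S(G,t)` on words of length `t`:
`u` and `v` are adjacent iff there is an index `i` with `u j = v j` for `j < i`,
`u i` adjacent to `v i` in `G`, and `u j = v i`, `v j = u i` for `j > i`. -/
def sierAdj (G : SimpleGraph V) (t : ℕ) (u v : Fin t → V) : Prop :=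
  ∃ i : Fin t, (∀ j, j < i → u j = v j) ∧ G.Adj (u i) (v i) ∧
    ∀ j, i < j → u j = v i ∧ v j = u i

/-- The generalized Sierpiński graph `S(G,t)`. -/
def sier (G : SimpleGraph V) (t : ℕ) : SimpleGraph (Fin t → V) where
  Adj := sierAdj G t
  symm := by
    constructor
    rintro u v ⟨i, h1, h2, h3⟩
    exact ⟨i, fun j hj => (h1 j hj).symm, h2.symm,
      fun j hj => ⟨(h3 j hj).2, (h3 j hj).1⟩⟩
  loopless := by
    constructor
    rintro u ⟨i, h1, h2, h3⟩
    exact G.irrefl h2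

/-- `linkingAt G t p u v` : `uv` is a linking edge of `S(G,t)` appearing at
(0-indexed) position `p < t - 1`; in the paper's terminology this linking edge is
produced at step `t - p`, and its contraction is a vertex contracted at step `t - p`. -/
def linkingAt (G : SimpleGraph V) (t p : ℕ) (u v : Fin t → V) : Prop :=
  ∃ i : Fin t, i.val = p ∧ i.val + 1 < t ∧ (∀ j, j < i → u j = v j) ∧
    G.Adj (u i) (v i) ∧ ∀ j, i < j → u j = v i ∧ v j = u i

/-- `uv` is a linking edge of `S(G,t)` (an edge appearing at some step `≥ 2`). -/
def linking (G : SimpleGraph V) (t : ℕ) (u v : Fin t → V) : Prop :=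
  ∃ p, linkingAt G t p u v

/-- The equivalence relation on words generated by identifying the two endpoints
of each linking edge. -/
def gasketSetoid (G : SimpleGraph V) (t : ℕ) : Setoid (Fin t → V) :=
  Relation.EqvGen.setoid (linking G t)

/-- The generalized Sierpiński gasket graph `S[G,t]`, obtained from `S(G,t)` by
contracting all linking edges. -/
def gasket (G : SimpleGraph V) (t : ℕ) :
    SimpleGraph (Quotient (gasketSetoid G t)) where
  Adj x y := x ≠ y ∧ ∃ u v, Quotient.mk (gasketSetoid G t) u = x ∧
    Quotient.mk (gasketSetoid G t) v = y ∧ sierAdj G t u v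
  symm := by
    constructor
    rintro x y ⟨hxy, u, v, hu, hv, h⟩
    exact ⟨hxy.symm, v, u, hv, hu, (sier G t).adj_symm h⟩
  loopless := ⟨fun _ h => h.1 rfl⟩

/-- The expanded word `i j j ... j`; for `ij ∈ E(G)` its class in `S[G,t]` is the
contracted vertex `{i,j}_t`. -/
def topWord (t : ℕ) (i j : V) : Fin t → V := fun k => if k.val = 0 then i else j

lemma sier_adj_iff (G : SimpleGraph V) (t : ℕ) (u v : Fin t → V) :
    (sier G t).Adj u v ↔ sierAdj G t u v := Iff.rfl

lemma mk_eq_of_adj (G : SimpleGraph V) {a b : V} (h : G.Adj a b) :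
    G.connectedComponentMk a = G.connectedComponentMk b :=
  SimpleGraph.ConnectedComponent.sound h.reachable

lemma cmp_out (G : SimpleGraph V) (D : G.ConnectedComponent) :
    G.connectedComponentMk D.out = D := D.out_eq

/-- the word with prefix from `u` below `k` and constant `x` from `k` on. -/
def cw {t : ℕ} (u : Fin t → V) (k : ℕ) (x : V) : Fin t → V :=
  fun j => if (j : ℕ) < k then u j else x

/-- Base-case helper: changing only the last coordinate along a `G`-walk. -/
lemma walk_update (G : SimpleGraph V) (t k : ℕ) (hk : k < t) (hkt : k + 1 = t)
    (u : Fin t → V) {a b : V} (p : G.Walk a b) :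
    (sier G t).Reachable (Function.update u ⟨k, hk⟩ a) (Function.update u ⟨k, hk⟩ b) := by
  induction p with
  | nil => exact SimpleGraph.Reachable.refl _
  | cons hadj q ih =>
    refine SimpleGraph.Reachable.trans (SimpleGraph.Adj.reachable ?_) ih
    refine ⟨⟨k, hk⟩, ?_, ?_, ?_⟩
    · intro j hj
      have hj' : j ≠ ⟨k, hk⟩ := ne_of_lt hj
      rw [Function.update_of_ne hj', Function.update_of_ne hj']
    · simpa using hadj
    · intro j hj
      exfalso
      have := j.isLt
      have := (Fin.lt_def.mp hj)
      simp at this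
      omega

/-- Step-case helper: moving the constant tail value along a `G`-walk,
given reachability at level `k+1` as a hypothesis. -/
lemma walk_tail (G : SimpleGraph V) (D : G.ConnectedComponent) (t k : ℕ) (hk1 : k + 1 < t)
    (u : Fin t → V)
    (hnext : ∀ u' v' : Fin t → V, (∀ j : Fin t, (j : ℕ) < k + 1 → u' j = v' j) →
      (∀ j : Fin t, k + 1 ≤ (j : ℕ) → G.connectedComponentMk (u' j) = D) →
      (∀ j : Fin t, k + 1 ≤ (j : ℕ) → G.connectedComponentMk (v' j) = D) →
      (sier G t).Reachable u' v')
    {a b : V} (p : G.Walk a b) (ha : G.connectedComponentMk a = D) :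
    (sier G t).Reachable (cw u k a) (cw u k b) := by
  induction p with
  | nil => exact SimpleGraph.Reachable.refl _
  | @cons a a' b hadj q ih =>
    have ha' : G.connectedComponentMk a' = D := (mk_eq_of_adj G hadj).symm.trans ha
    refine SimpleGraph.Reachable.trans ?_ (ih ha')
    -- cw u k a ∼ w1 ∼ w2 ∼ cw u k a'
    set w1 : Fin t → V := fun j => if (j : ℕ) < k then u j else if (j : ℕ) = k then a else a'
      with hw1
    set w2 : Fin t → V := fun j => if (j : ℕ) < k then u j else if (j : ℕ) = k then a' else a
      with hw2
    have r1 : (sier G t).Reachable (cw u k a) w1 := by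
      apply hnext
      · intro j hj
        simp only [cw, hw1]
        rcases Nat.lt_or_ge (j : ℕ) k with h | h
        · simp [h]
        · have : (j : ℕ) = k := by omega
          simp [this]
      · intro j hj
        simp only [cw]
        rw [if_neg (by omega)]
        exact ha
      · intro j hj
        simp only [hw1]
        rw [if_neg (by omega), if_neg (by omega)]
        exact ha'
    have e1k : w1 ⟨k, by omega⟩ = a := by simp [hw1]
    have e2k : w2 ⟨k, by omega⟩ = a' := by simp [hw2]
    have e1j : ∀ j : Fin t, k < (j : ℕ) → w1 j = a' := by
      intro j hj
      simp only [hw1]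
      rw [if_neg (by omega), if_neg (by omega)]
    have e2j : ∀ j : Fin t, k < (j : ℕ) → w2 j = a := by
      intro j hj
      simp only [hw2]
      rw [if_neg (by omega), if_neg (by omega)]
    have r2 : (sier G t).Adj w1 w2 := by
      refine ⟨⟨k, by omega⟩, ?_, ?_, ?_⟩
      · intro j hj
        have hjlt : (j : ℕ) < k := by simpa [Fin.lt_def] using hj
        simp only [hw1, hw2, if_pos hjlt]
      · rw [e1k, e2k]; exact hadj
      · intro j hj
        have hjk : k < (j : ℕ) := by simpa [Fin.lt_def] using hj
        rw [e1j j hjk, e2j j hjk, e1k, e2k]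
        exact ⟨rfl, rfl⟩
    have r3 : (sier G t).Reachable w2 (cw u k a') := by
      apply hnext
      · intro j hj
        simp only [cw, hw2]
        rcases Nat.lt_or_ge (j : ℕ) k with h | h
        · simp [h]
        · have : (j : ℕ) = k := by omega
          simp [this]
      · intro j hj
        simp only [hw2]
        rw [if_neg (by omega), if_neg (by omega)]
        exact ha
      · intro j hj
        simp only [cw]
        rw [if_neg (by omega)]
        exact ha'
    exact r1.trans (r2.reachable.trans r3)

/-- Core reachability: words agreeing below `k`, whose coordinates from `k` on
all lie in the component `D`, are connected in `S(G,t)`. -/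
lemma sier_core (G : SimpleGraph V) (D : G.ConnectedComponent) :
    ∀ (m t k : ℕ), t - k = m → k < t → ∀ u v : Fin t → V,
      (∀ j : Fin t, (j : ℕ) < k → u j = v j) →
      (∀ j : Fin t, k ≤ (j : ℕ) → G.connectedComponentMk (u j) = D) →
      (∀ j : Fin t, k ≤ (j : ℕ) → G.connectedComponentMk (v j) = D) →
      (sier G t).Reachable u v := by
  intro m
  induction m with
  | zero => intro t k hm hk; omega
  | succ m ih =>
    intro t k hm hk u v hpre hu hv
    have hreach : G.Reachable (u ⟨k, hk⟩) (v ⟨k, hk⟩) := by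
      apply SimpleGraph.ConnectedComponent.exact
      rw [hu ⟨k, hk⟩ (le_refl _), hv ⟨k, hk⟩ (le_refl _)]
    by_cases hkt : k + 1 = t
    · -- only the last coordinate can differ
      have hvu : v = Function.update u ⟨k, hk⟩ (v ⟨k, hk⟩) := by
        funext j
        rcases eq_or_ne j ⟨k, hk⟩ with rfl | hj
        · simp
        · have hlt : (j : ℕ) < k := by
            have h1 := j.isLt
            have h2 : (j : ℕ) ≠ k := fun h => hj (Fin.ext h)
            omega
          rw [Function.update_of_ne hj]
          exact (hpre j hlt).symm
      have huu : u = Function.update u ⟨k, hk⟩ (u ⟨k, hk⟩) := by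
        rw [Function.update_eq_self]
      obtain ⟨p⟩ := hreach
      rw [hvu]
      nth_rewrite 1 [huu]
      exact walk_update G t k hk hkt u p
    · -- recursive step
      have hk1 : k + 1 < t := by omega
      have hnext : ∀ u' v' : Fin t → V, (∀ j : Fin t, (j : ℕ) < k + 1 → u' j = v' j) →
          (∀ j : Fin t, k + 1 ≤ (j : ℕ) → G.connectedComponentMk (u' j) = D) →
          (∀ j : Fin t, k + 1 ≤ (j : ℕ) → G.connectedComponentMk (v' j) = D) →
          (sier G t).Reachable u' v' :=
        fun u' v' h1 h2 h3 => ih t (k + 1) (by omega) hk1 u' v' h1 h2 h3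
      have ru : (sier G t).Reachable u (cw u k (u ⟨k, hk⟩)) := by
        apply hnext
        · intro j hj
          simp only [cw]
          rcases Nat.lt_or_ge (j : ℕ) k with h | h
          · rw [if_pos h]
          · have hjk : (j : ℕ) = k := by omega
            rw [if_neg (by omega)]
            congr 1
            exact Fin.ext hjk
        · intro j hj; exact hu j (by omega)
        · intro j hj
          simp only [cw]
          rw [if_neg (by omega)]
          exact hu ⟨k, hk⟩ (le_refl _)
      have rv : (sier G t).Reachable (cw u k (v ⟨k, hk⟩)) v := by
        apply SimpleGraph.Reachable.symm
        apply hnext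
        · intro j hj
          simp only [cw]
          rcases Nat.lt_or_ge (j : ℕ) k with h | h
          · rw [if_pos h]; exact (hpre j h).symm
          · have hjk : (j : ℕ) = k := by omega
            rw [if_neg (by omega)]
            congr 1
            exact Fin.ext hjk
        · intro j hj; exact hv j (by omega)
        · intro j hj
          simp only [cw]
          rw [if_neg (by omega)]
          exact hv ⟨k, hk⟩ (le_refl _)
      obtain ⟨p⟩ := hreach
      have rm : (sier G t).Reachable (cw u k (u ⟨k, hk⟩)) (cw u k (v ⟨k, hk⟩)) :=
        walk_tail G D t k hk1 u hnext p (hu ⟨k, hk⟩ (le_refl _))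
      exact (ru.trans rm).trans rv

section Canon

variable (G : SimpleGraph V) (s : ℕ)

/-- component of the last letter -/
def lastC (u : Fin (s + 1) → V) : G.ConnectedComponent :=
  G.connectedComponentMk (u (Fin.last s))

/-- the tail of `u` from position `j` on has all letters in the last component -/
def tailOK (u : Fin (s + 1) → V) (j : Fin (s + 1)) : Prop :=
  ∀ j', j ≤ j' → G.connectedComponentMk (u j') = lastC G s u

open Classical in
/-- canonical form: replace the maximal constant-component tail by the
canonical representative of its component -/
noncomputable def canonW (u : Fin (s + 1) → V) : Fin (s + 1) → V :=
  fun j => if tailOK G s u j then (lastC G s u).out else u j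

variable {G s}

lemma canonW_of_tailOK {u : Fin (s + 1) → V} {j : Fin (s + 1)} (h : tailOK G s u j) :
    canonW G s u j = (lastC G s u).out := if_pos h

lemma canonW_of_not_tailOK {u : Fin (s + 1) → V} {j : Fin (s + 1)} (h : ¬ tailOK G s u j) :
    canonW G s u j = u j := if_neg h

lemma cmp_canonW (u : Fin (s + 1) → V) (j : Fin (s + 1)) :
    G.connectedComponentMk (canonW G s u j) = G.connectedComponentMk (u j) := by
  by_cases h : tailOK G s u j
  · rw [canonW_of_tailOK h, cmp_out]
    exact (h j (le_refl j)).symm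
  · rw [canonW_of_not_tailOK h]

lemma lastC_canonW (u : Fin (s + 1) → V) : lastC G s (canonW G s u) = lastC G s u := by
  unfold lastC
  rw [cmp_canonW]

lemma tailOK_canonW (u : Fin (s + 1) → V) (j : Fin (s + 1)) :
    tailOK G s (canonW G s u) j ↔ tailOK G s u j := by
  unfold tailOK
  rw [lastC_canonW]
  constructor <;> intro h j' hj'
  · rw [← cmp_canonW u j']; exact h j' hj'
  · rw [cmp_canonW u j']; exact h j' hj'

lemma canonW_idem (u : Fin (s + 1) → V) : canonW G s (canonW G s u) = canonW G s u := by
  funext j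
  by_cases h : tailOK G s u j
  · rw [canonW_of_tailOK ((tailOK_canonW u j).mpr h), lastC_canonW,
      canonW_of_tailOK h]
  · rw [canonW_of_not_tailOK (fun hh => h ((tailOK_canonW u j).mp hh))]

lemma canonW_adj {u v : Fin (s + 1) → V} (h : sierAdj G (s + 1) u v) :
    canonW G s u = canonW G s v := by
  obtain ⟨i, h1, h2, h3⟩ := h
  have hcm : ∀ j, G.connectedComponentMk (u j) = G.connectedComponentMk (v j) := by
    intro j
    rcases lt_trichotomy j i with hlt | rfl | hgt
    · rw [h1 j hlt]
    · exact mk_eq_of_adj G h2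
    · rw [(h3 j hgt).1, (h3 j hgt).2]
      exact (mk_eq_of_adj G h2).symm
  have hL : lastC G s u = lastC G s v := hcm _
  have hE : ∀ p : Fin (s + 1), i ≤ p → G.connectedComponentMk (u p) =
      G.connectedComponentMk (u i) := by
    intro p hp
    rcases eq_or_lt_of_le hp with rfl | hp'
    · rfl
    · rw [(h3 p hp').1]
      exact (mk_eq_of_adj G h2).symm
  have htail : ∀ j : Fin (s + 1), i ≤ j → tailOK G s u j := by
    intro j hij j' hj'
    rw [hE j' (le_trans hij hj')]
    unfold lastC
    rw [hE (Fin.last s) (le_trans hij (Fin.le_last j))]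
  funext j
  by_cases h : tailOK G s u j
  · have h' : tailOK G s v j := by
      intro j' hj'
      rw [← hcm, ← hL]
      exact h j' hj'
    rw [canonW_of_tailOK h, canonW_of_tailOK h', hL]
  · have h' : ¬ tailOK G s v j := by
      intro hv
      exact h (fun j' hj' => by rw [hcm, hL]; exact hv j' hj')
    rw [canonW_of_not_tailOK h, canonW_of_not_tailOK h']
    exact h1 j (lt_of_not_ge (fun hij => h (htail j hij)))

lemma reach_canonW (u : Fin (s + 1) → V) :
    (sier G (s + 1)).Reachable u (canonW G s u) := by
  classical
  have hex : ∃ k : ℕ, ∀ j : Fin (s + 1), k ≤ (j : ℕ) →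
      G.connectedComponentMk (u j) = lastC G s u := by
    refine ⟨s, fun j hj => ?_⟩
    have : j = Fin.last s := Fin.ext (by have := j.isLt; simp [Fin.last]; omega)
    rw [this]; rfl
  set k := Nat.find hex with hkdef
  have hk_spec := Nat.find_spec hex
  have hks : k ≤ s := Nat.find_le (by
    intro j hj
    have : j = Fin.last s := Fin.ext (by have := j.isLt; simp [Fin.last]; omega)
    rw [this]; rfl)
  apply sier_core G (lastC G s u) (s + 1 - k) (s + 1) k rfl (by omega)
  · intro j hj
    have hnS : ¬ ∀ j' : Fin (s + 1), (j : ℕ) ≤ (j' : ℕ) →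
        G.connectedComponentMk (u j') = lastC G s u := Nat.find_min hex hj
    have hnt : ¬ tailOK G s u j := by
      intro ht
      exact hnS (fun j' hj' => ht j' (Fin.le_def.mpr hj'))
    rw [canonW_of_not_tailOK hnt]
  · intro j hj
    exact hk_spec j hj
  · intro j hj
    rw [cmp_canonW]
    exact hk_spec j hj

lemma canonW_walk {u v : Fin (s + 1) → V} (p : (sier G (s + 1)).Walk u v) :
    canonW G s u = canonW G s v := by
  induction p with
  | nil => rfl
  | cons hadj q ih => exact (canonW_adj hadj).trans ih

/-- The connected components of `S(G,t)` are classified by canonical words. -/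
noncomputable def sierCompEquiv :
    (sier G (s + 1)).ConnectedComponent ≃ {w : Fin (s + 1) → V // canonW G s w = w} where
  toFun := SimpleGraph.ConnectedComponent.lift
    (fun u => ⟨canonW G s u, canonW_idem u⟩)
    (fun _ _ p _ => Subtype.ext (canonW_walk p))
  invFun a := (sier G (s + 1)).connectedComponentMk a.1
  left_inv := by
    apply SimpleGraph.ConnectedComponent.ind
    intro u
    simp only [SimpleGraph.ConnectedComponent.lift_mk]
    exact (SimpleGraph.ConnectedComponent.sound (reach_canonW u)).symm
  right_inv := by
    rintro ⟨w, hw⟩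
    simp only [SimpleGraph.ConnectedComponent.lift_mk]
    exact Subtype.ext hw

end Canon

section GasketSier

variable (G : SimpleGraph V) (t : ℕ)

lemma linking_sierAdj {u v : Fin t → V} (h : linking G t u v) : sierAdj G t u v := by
  obtain ⟨p, i, _, _, h1, h2, h3⟩ := h
  exact ⟨i, h1, h2, h3⟩

lemma gq_sound : ∀ a b : Fin t → V, Relation.EqvGen (linking G t) a b →
    (sier G t).connectedComponentMk a = (sier G t).connectedComponentMk b := by
  intro a b hab
  induction hab with
  | rel x y h =>
    exact SimpleGraph.ConnectedComponent.sound
      (SimpleGraph.Adj.reachable (linking_sierAdj G t h))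
  | refl x => rfl
  | symm x y _ ih => exact ih.symm
  | trans x y z _ _ ih1 ih2 => exact ih1.trans ih2

/-- map on underlying quotient: each gasket class maps to a sier component -/
noncomputable def gq : Quotient (gasketSetoid G t) → (sier G t).ConnectedComponent :=
  Quotient.lift (fun u => (sier G t).connectedComponentMk u) (gq_sound G t)

lemma gq_mk (u : Fin t → V) :
    gq G t (Quotient.mk (gasketSetoid G t) u) = (sier G t).connectedComponentMk u := rfl

lemma gq_adj {x y : Quotient (gasketSetoid G t)} (h : (gasket G t).Adj x y) :
    gq G t x = gq G t y := by
  obtain ⟨hne, u, v, hu, hv, hadj⟩ := h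
  rw [← hu, ← hv, gq_mk, gq_mk]
  exact SimpleGraph.ConnectedComponent.sound (SimpleGraph.Adj.reachable hadj)

lemma gq_walk {x y : Quotient (gasketSetoid G t)} (p : (gasket G t).Walk x y) :
    gq G t x = gq G t y := by
  induction p with
  | nil => rfl
  | cons hadj q ih => exact (gq_adj G t hadj).trans ih

lemma sier_reach_gasket {u v : Fin t → V} (h : (sier G t).Reachable u v) :
    (gasket G t).Reachable (Quotient.mk (gasketSetoid G t) u)
      (Quotient.mk (gasketSetoid G t) v) := by
  obtain ⟨p⟩ := h
  induction p with
  | nil => exact SimpleGraph.Reachable.refl _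
  | @cons a b c hadj q ih =>
    refine SimpleGraph.Reachable.trans ?_ ih
    by_cases he : Quotient.mk (gasketSetoid G t) a = Quotient.mk (gasketSetoid G t) b
    · rw [he]
    · exact SimpleGraph.Adj.reachable ⟨he, a, b, rfl, rfl, hadj⟩

/-- Contracting the linking edges does not change connected components. -/
noncomputable def gasketCompEquiv :
    (gasket G t).ConnectedComponent ≃ (sier G t).ConnectedComponent where
  toFun := SimpleGraph.ConnectedComponent.lift (gq G t) (fun _ _ p _ => gq_walk G t p)
  invFun := SimpleGraph.ConnectedComponent.lift
    (fun u => (gasket G t).connectedComponentMk (Quotient.mk (gasketSetoid G t) u))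
    (fun _ _ p _ => SimpleGraph.ConnectedComponent.sound
      (sier_reach_gasket G t (SimpleGraph.Walk.reachable p)))
  left_inv := by
    apply SimpleGraph.ConnectedComponent.ind
    intro x
    induction x using Quotient.ind with
    | _ u => rfl
  right_inv := by
    apply SimpleGraph.ConnectedComponent.ind
    intro u
    rfl

end GasketSier

section Counting

variable {G : SimpleGraph V} {s : ℕ}

/-- words with all letters in the last component -/
def FullW (G : SimpleGraph V) (s : ℕ) (w : Fin (s + 1) → V) : Prop :=
  ∀ i, G.connectedComponentMk (w i) = lastC G s w

/-- the condition on the first letter for a cons to be canonical -/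
def headOK (G : SimpleGraph V) (s : ℕ) (x : V) (w : Fin (s + 1) → V) : Prop :=
  FullW G s w → G.connectedComponentMk x = lastC G s w → x = (lastC G s w).out

lemma lastC_cons (x : V) (w : Fin (s + 1) → V) :
    lastC G (s + 1) (Fin.cons x w) = lastC G s w := by
  unfold lastC
  rw [← Fin.succ_last, Fin.cons_succ]

lemma tailOK_cons_succ (x : V) (w : Fin (s + 1) → V) (j : Fin (s + 1)) :
    tailOK G (s + 1) (Fin.cons x w) j.succ ↔ tailOK G s w j := by
  constructor
  · intro h j' hj'
    have := h j'.succ (by rwa [Fin.succ_le_succ_iff])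
    rwa [Fin.cons_succ, lastC_cons] at this
  · intro h j'' hj''
    rcases Fin.eq_zero_or_eq_succ j'' with rfl | ⟨i, rfl⟩
    · exact absurd (Fin.le_zero_iff.mp hj'') (Fin.succ_ne_zero j)
    · rw [Fin.cons_succ, lastC_cons]
      exact h i (by rwa [← Fin.succ_le_succ_iff])

lemma tailOK_cons_zero (x : V) (w : Fin (s + 1) → V) :
    tailOK G (s + 1) (Fin.cons x w) 0 ↔
      (G.connectedComponentMk x = lastC G s w ∧ FullW G s w) := by
  constructor
  · intro h
    constructor
    · have := h 0 (le_refl _)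
      rwa [Fin.cons_zero, lastC_cons] at this
    · intro i
      have := h i.succ (Fin.zero_le _)
      rwa [Fin.cons_succ, lastC_cons] at this
  · rintro ⟨h1, h2⟩ j'' _
    rcases Fin.eq_zero_or_eq_succ j'' with rfl | ⟨i, rfl⟩
    · rwa [Fin.cons_zero, lastC_cons]
    · rw [Fin.cons_succ, lastC_cons]
      exact h2 i

lemma canonW_cons_succ (x : V) (w : Fin (s + 1) → V) (j : Fin (s + 1)) :
    canonW G (s + 1) (Fin.cons x w) j.succ = canonW G s w j := by
  by_cases h : tailOK G s w j
  · rw [canonW_of_tailOK ((tailOK_cons_succ x w j).mpr h), canonW_of_tailOK h, lastC_cons]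
  · rw [canonW_of_not_tailOK (fun hh => h ((tailOK_cons_succ x w j).mp hh)),
      canonW_of_not_tailOK h, Fin.cons_succ]

lemma isCanon_cons_iff (x : V) (w : Fin (s + 1) → V) :
    canonW G (s + 1) (Fin.cons x w) = Fin.cons x w ↔
      (canonW G s w = w ∧ headOK G s x w) := by
  constructor
  · intro h
    constructor
    · funext j
      rw [← canonW_cons_succ x w j, h, Fin.cons_succ]
    · intro hF hc
      have h0 : tailOK G (s + 1) (Fin.cons x w) 0 :=
        (tailOK_cons_zero x w).mpr ⟨hc, hF⟩
      have := congrFun h 0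
      rw [canonW_of_tailOK h0, lastC_cons, Fin.cons_zero] at this
      exact this.symm
  · rintro ⟨h1, h2⟩
    funext j''
    rcases Fin.eq_zero_or_eq_succ j'' with rfl | ⟨i, rfl⟩
    · rw [Fin.cons_zero]
      by_cases h0 : tailOK G (s + 1) (Fin.cons x w) 0
      · obtain ⟨hc, hF⟩ := (tailOK_cons_zero x w).mp h0
        rw [canonW_of_tailOK h0, lastC_cons]
        exact (h2 hF hc).symm
      · rw [canonW_of_not_tailOK h0, Fin.cons_zero]
    · rw [canonW_cons_succ, Fin.cons_succ, h1]

lemma full_canon_const {w : Fin (s + 1) → V} (hc : canonW G s w = w) (hF : FullW G s w) :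
    w = fun _ => (lastC G s w).out := by
  funext j
  have ht : tailOK G s w j := fun j' _ => hF j'
  conv_lhs => rw [← hc]
  exact canonW_of_tailOK ht

lemma lastC_const (b : V) :
    lastC G s (fun _ => b) = G.connectedComponentMk b := rfl

lemma const_out_canon (x : V) :
    canonW G s (fun _ => (G.connectedComponentMk x).out) =
      fun _ => (G.connectedComponentMk x).out := by
  funext j
  have ht : tailOK G s (fun _ => (G.connectedComponentMk x).out) j := fun j' _ => rfl
  rw [canonW_of_tailOK ht, lastC_const, cmp_out]

lemma not_headOK_iff (x : V) (w : Fin (s + 1) → V) :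
    ¬ headOK G s x w ↔
      (FullW G s w ∧ G.connectedComponentMk x = lastC G s w ∧ x ≠ (lastC G s w).out) := by
  unfold headOK
  tauto

/-- the canonical words of length `s+2` are cons pairs with a canonical tail and
an admissible head. -/
noncomputable def consEquiv :
    {w : Fin (s + 2) → V // canonW G (s + 1) w = w} ≃
      {q : V × {w : Fin (s + 1) → V // canonW G s w = w} // headOK G s q.1 q.2.1} where
  toFun p :=
    ⟨(p.1 0, ⟨Fin.tail p.1,
      ((isCanon_cons_iff (p.1 0) (Fin.tail p.1)).mp
        (by rw [Fin.cons_self_tail]; exact p.2)).1⟩),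
      ((isCanon_cons_iff (p.1 0) (Fin.tail p.1)).mp
        (by rw [Fin.cons_self_tail]; exact p.2)).2⟩
  invFun q := ⟨Fin.cons q.1.1 q.1.2.1, (isCanon_cons_iff q.1.1 q.1.2.1).mpr ⟨q.1.2.2, q.2⟩⟩
  left_inv p := Subtype.ext (Fin.cons_self_tail p.1)
  right_inv q := by
    refine Subtype.ext (Prod.ext ?_ (Subtype.ext ?_))
    · show (Fin.cons q.1.1 q.1.2.1 : Fin (s + 2) → V) 0 = q.1.1
      exact Fin.cons_zero _ _
    · show Fin.tail (Fin.cons q.1.1 q.1.2.1 : Fin (s + 2) → V) = q.1.2.1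
      exact Fin.tail_cons _ _

/-- the bad pairs are classified by non-canonical representatives of components -/
noncomputable def badEquiv :
    {q : V × {w : Fin (s + 1) → V // canonW G s w = w} // ¬ headOK G s q.1 q.2.1} ≃
      {x : V // x ≠ (G.connectedComponentMk x).out} where
  toFun := fun ⟨(x, ⟨w, hw⟩), h⟩ =>
    ⟨x, by
      obtain ⟨hF, hc, hne⟩ := (not_headOK_iff x w).mp h
      rwa [hc]⟩
  invFun := fun ⟨x, hx⟩ =>
    ⟨(x, ⟨fun _ => (G.connectedComponentMk x).out, const_out_canon x⟩), by
      rw [not_headOK_iff]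
      refine ⟨fun i => rfl, ?_, ?_⟩
      · rw [lastC_const, cmp_out]
      · rw [lastC_const, cmp_out]
        exact hx⟩
  left_inv := by
    rintro ⟨⟨x, ⟨w, hw⟩⟩, h⟩
    obtain ⟨hF, hc, hne⟩ := (not_headOK_iff x w).mp h
    refine Subtype.ext (Prod.ext rfl (Subtype.ext ?_))
    show (fun _ => (G.connectedComponentMk x).out) = w
    rw [full_canon_const hw hF, hc]
  right_inv := by
    rintro ⟨x, hx⟩
    rfl

/-- canonical representatives of components -/
noncomputable def outEquiv (G : SimpleGraph V) :
    {x : V // x = (G.connectedComponentMk x).out} ≃ G.ConnectedComponent where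
  toFun := fun ⟨x, _⟩ => G.connectedComponentMk x
  invFun := fun D => ⟨D.out, by rw [cmp_out]⟩
  left_inv := by
    rintro ⟨x, hx⟩
    exact Subtype.ext hx.symm
  right_inv := fun D => cmp_out G D

/-- canonical words of length one -/
noncomputable def baseEquiv (G : SimpleGraph V) :
    {w : Fin 1 → V // canonW G 0 w = w} ≃ G.ConnectedComponent := by
  refine Equiv.trans ?_ (outEquiv G)
  refine ⟨fun ⟨w, hw⟩ => ⟨w 0, ?_⟩, fun ⟨x, hx⟩ => ⟨fun _ => x, ?_⟩, ?_, ?_⟩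
  · have ht : tailOK G 0 w 0 := by
      intro j' _
      have h1 := j'.isLt
      have h2 : (Fin.last 0 : Fin 1).val = 0 := rfl
      have : j' = Fin.last 0 := Fin.ext (by omega)
      rw [this]; rfl
    have := congrFun hw 0
    rw [canonW_of_tailOK ht] at this
    have hL : lastC G 0 w = G.connectedComponentMk (w 0) := by
      unfold lastC
      congr 1
    rw [hL] at this
    exact this.symm
  · funext j
    have ht : tailOK G 0 (fun _ => x) j := fun j' _ => rfl
    rw [canonW_of_tailOK ht, lastC_const, ← hx]
  · rintro ⟨w, hw⟩
    refine Subtype.ext (funext fun j => ?_)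
    have h1 := j.isLt
    have h2 : (0 : Fin 1).val = 0 := rfl
    have : j = 0 := Fin.ext (by omega)
    rw [this]
  · rintro ⟨x, hx⟩
    rfl

end Counting

section Final

variable [Fintype V]

lemma card_rec (G : SimpleGraph V) (s : ℕ) :
    Nat.card {w : Fin (s + 2) → V // canonW G (s + 1) w = w} + Fintype.card V =
      Fintype.card V * Nat.card {w : Fin (s + 1) → V // canonW G s w = w} +
        Nat.card G.ConnectedComponent := by
  classical
  have e1 : Nat.card {w : Fin (s + 2) → V // canonW G (s + 1) w = w} =
      Nat.card {q : V × {w : Fin (s + 1) → V // canonW G s w = w} // headOK G s q.1 q.2.1} :=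
    Nat.card_congr consEquiv
  have e2 : Nat.card {q : V × {w : Fin (s + 1) → V // canonW G s w = w} // headOK G s q.1 q.2.1}
      + Nat.card {q : V × {w : Fin (s + 1) → V // canonW G s w = w} // ¬ headOK G s q.1 q.2.1}
      = Nat.card (V × {w : Fin (s + 1) → V // canonW G s w = w}) := by
    rw [← Nat.card_sum]
    exact Nat.card_congr (Equiv.sumCompl _)
  have e3a : Nat.card {q : V × {w : Fin (s + 1) → V // canonW G s w = w} //
      ¬ headOK G s q.1 q.2.1} = Nat.card {x : V // x ≠ (G.connectedComponentMk x).out} :=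
    Nat.card_congr badEquiv
  have e3b : Nat.card {x : V // x = (G.connectedComponentMk x).out} =
      Nat.card G.ConnectedComponent := Nat.card_congr (outEquiv G)
  have e3c : Nat.card {x : V // x = (G.connectedComponentMk x).out} +
      Nat.card {x : V // x ≠ (G.connectedComponentMk x).out} = Nat.card V := by
    rw [← Nat.card_sum]
    exact Nat.card_congr (Equiv.sumCompl _)
  have e4 : Nat.card (V × {w : Fin (s + 1) → V // canonW G s w = w}) =
      Fintype.card V * Nat.card {w : Fin (s + 1) → V // canonW G s w = w} := by
    rw [Nat.card_prod, Nat.card_eq_fintype_card]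
  have e5 : Nat.card V = Fintype.card V := Nat.card_eq_fintype_card
  rw [← e4]
  omega

lemma card_formula (G : SimpleGraph V) (n c : ℕ) (hn : n = Fintype.card V)
    (h2 : 2 ≤ n) (hc : c = Nat.card G.ConnectedComponent) (s : ℕ) :
    (n - 1) * Nat.card {w : Fin (s + 1) → V // canonW G s w = w} =
      n ^ (s + 1) * (c - 1) + n - c := by
  have hsurj : Function.Surjective (G.connectedComponentMk) := fun C => Quot.exists_rep C
  have hVne : Nonempty V := by
    rw [← Fintype.card_pos_iff]
    omega
  have hc1 : 1 ≤ c := by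
    rw [hc]
    have : Nonempty G.ConnectedComponent := Nonempty.map G.connectedComponentMk hVne
    exact Nat.card_pos
  have hcn : c ≤ n := by
    rw [hc, hn, ← Nat.card_eq_fintype_card]
    exact Nat.card_le_card_of_surjective _ hsurj
  induction s with
  | zero =>
    rw [Nat.card_congr (baseEquiv G), ← hc]
    have hle : c ≤ n ^ 1 * (c - 1) + n := le_trans hcn (Nat.le_add_left _ _)
    zify [hle, hc1, (by omega : 1 ≤ n)]
    ring
  | succ s ih =>
    have hr := card_rec G s
    rw [← hn, ← hc] at hr
    have hle1 : c ≤ n ^ (s + 1 + 1) * (c - 1) + n := le_trans hcn (Nat.le_add_left _ _)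
    have hle2 : c ≤ n ^ (s + 1) * (c - 1) + n := le_trans hcn (Nat.le_add_left _ _)
    zify [hle1, hle2, hc1, (by omega : 1 ≤ n)] at ih ⊢
    have hrz : ((Nat.card {w : Fin (s + 2) → V // canonW G (s + 1) w = w} : ℤ)) + n =
        n * Nat.card {w : Fin (s + 1) → V // canonW G s w = w} + c := by
      exact_mod_cast hr
    linear_combination (n : ℤ) * ih + ((n : ℤ) - 1) * hrz

end Final


/-- `S[G,t]` has `(n^t(cc(G)−1) + n − cc(G))/(n−1)` connected components. -/
theorem stmt_2 [Fintype V] (G : SimpleGraph V) (n c t : ℕ)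
    (hn : n = Fintype.card V) (h2 : 2 ≤ n) (ht : 1 ≤ t)
    (hc : c = Nat.card G.ConnectedComponent) :
    Nat.card (gasket G t).ConnectedComponent = (n ^ t * (c - 1) + n - c) / (n - 1) := by
  obtain ⟨s, rfl⟩ : ∃ s, t = s + 1 := ⟨t - 1, by omega⟩
  have h1 : Nat.card (gasket G (s + 1)).ConnectedComponent
      = Nat.card (sier G (s + 1)).ConnectedComponent :=
    Nat.card_congr (gasketCompEquiv G (s + 1))
  have h2' : Nat.card (sier G (s + 1)).ConnectedComponent
      = Nat.card {w : Fin (s + 1) → V // canonW G s w = w} :=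
    Nat.card_congr sierCompEquiv
  have h3 := card_formula G n c hn h2 hc s
  rw [h1, h2', ← h3, Nat.mul_div_cancel_left _ (by omega : 0 < n - 1)]
end

section
/- Two contracted vertices {i,j}_2 and {l,k}_2 are adjacent in S[G,2] if and only if |{i,j} ∩ {l,k}| = 1 and the three vertices in {i,j,k,l} induce a triangle in G. -/
variable {V : Type*}

section MainAux
variable {V : Type*}

lemma vec2_ext (u : Fin 2 → V) : u = ![u 0, u 1] := by
  funext j; fin_cases j <;> simp

lemma vec2_eq {a b c d : V} : (![a, b] : Fin 2 → V) = ![c, d] ↔ a = c ∧ b = d := by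
  constructor
  · intro h; exact ⟨by simpa using congrFun h 0, by simpa using congrFun h 1⟩
  · rintro ⟨rfl, rfl⟩; rfl

lemma linking2_iff (G : SimpleGraph V) (u v : Fin 2 → V) :
    linking G 2 u v ↔ G.Adj (u 0) (v 0) ∧ u 1 = v 0 ∧ v 1 = u 0 := by
  constructor
  · rintro ⟨p, i, hip, hlt, h1, h2, h3⟩
    have hi : i = 0 := by omega
    subst hi
    exact ⟨h2, (h3 1 (by decide)).1, (h3 1 (by decide)).2⟩
  · rintro ⟨h1, h2, h3⟩
    refine ⟨0, 0, rfl, by norm_num, fun j hj => absurd hj (by omega), h1, fun j hj => ?_⟩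
    have : j = 1 := by omega
    subst this
    exact ⟨h2, h3⟩

lemma sierAdj2_iff (G : SimpleGraph V) (u v : Fin 2 → V) :
    sierAdj G 2 u v ↔ (G.Adj (u 0) (v 0) ∧ u 1 = v 0 ∧ v 1 = u 0) ∨
      (u 0 = v 0 ∧ G.Adj (u 1) (v 1)) := by
  constructor
  · rintro ⟨i, h1, h2, h3⟩
    have : i = 0 ∨ i = 1 := by omega
    rcases this with rfl | rfl
    · exact Or.inl ⟨h2, (h3 1 (by decide)).1, (h3 1 (by decide)).2⟩
    · exact Or.inr ⟨h1 0 (by decide), h2⟩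
  · rintro (⟨h1, h2, h3⟩ | ⟨h1, h2⟩)
    · refine ⟨0, fun j hj => absurd hj (by omega), h1, fun j hj => ?_⟩
      have : j = 1 := by omega
      subst this
      exact ⟨h2, h3⟩
    · refine ⟨1, fun j hj => ?_, h2, fun j hj => absurd hj (by omega)⟩
      have : j = 0 := by omega
      subst this
      exact h1

lemma eqvGen2_iff (G : SimpleGraph V) (u v : Fin 2 → V) :
    Relation.EqvGen (linking G 2) u v ↔ u = v ∨ linking G 2 u v := by
  constructor
  · intro h
    induction h with
    | rel a b h => exact Or.inr h
    | refl a => exact Or.inl rfl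
    | symm a b h ih =>
        rcases ih with rfl | hl
        · exact Or.inl rfl
        · rw [linking2_iff] at hl ⊢
          exact Or.inr ⟨hl.1.symm, hl.2.2, hl.2.1⟩
    | trans a b c hab hbc ihab ihbc =>
        rcases ihab with rfl | h1
        · exact ihbc
        · rcases ihbc with rfl | h2
          · exact Or.inr h1
          · rw [linking2_iff] at h1 h2
            left
            funext x
            fin_cases x
            · simpa using h1.2.2.symm.trans h2.2.1
            · simpa using h1.2.1.trans h2.2.2.symm
  · rintro (rfl | h)
    · exact Relation.EqvGen.refl u
    · exact Relation.EqvGen.rel _ _ h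

lemma mk2_eq (G : SimpleGraph V) (u v : Fin 2 → V) :
    (Quotient.mk (gasketSetoid G 2) u = Quotient.mk (gasketSetoid G 2) v) ↔
      u = v ∨ linking G 2 u v := by
  rw [Quotient.eq]
  exact eqvGen2_iff G u v

lemma class2_iff (G : SimpleGraph V) {a b : V} (hab : G.Adj a b) (u : Fin 2 → V) :
    Quotient.mk (gasketSetoid G 2) u = Quotient.mk (gasketSetoid G 2) ![a, b] ↔
      u = ![a, b] ∨ u = ![b, a] := by
  rw [mk2_eq, linking2_iff]
  simp only [Matrix.cons_val_zero, Matrix.cons_val_one, Matrix.head_cons]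
  constructor
  · rintro (rfl | ⟨h1, h2, h3⟩)
    · exact Or.inl rfl
    · right
      rw [vec2_ext u, h2, ← h3]
  · rintro (rfl | rfl)
    · exact Or.inl rfl
    · exact Or.inr ⟨by simpa using hab.symm, by simp, by simp⟩

lemma tri_all (G : SimpleGraph V) [DecidableEq V] {x y z : V} (hxy : G.Adj x y)
    (hxz : G.Adj x z) (hyz : G.Adj y z) :
    ∀ a ∈ ({x, y, z} : Finset V), ∀ b ∈ ({x, y, z} : Finset V), a ≠ b → G.Adj a b := by
  intro a ha b hb hne
  simp only [Finset.mem_insert, Finset.mem_singleton] at ha hb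
  rcases ha with rfl | rfl | rfl <;> rcases hb with rfl | rfl | rfl <;>
    first
      | exact absurd rfl hne
      | assumption
      | exact hxy.symm
      | exact hxz.symm
      | exact hyz.symm

end MainAux

/-- two contracted vertices `{i,j}_2` and `{l,k}_2` are adjacent in
`S[G,2]` iff `|{i,j} ∩ {l,k}| = 1` and the vertices `{i,j,l,k}` induce a triangle in `G`. -/
theorem stmt_5 [DecidableEq V] (G : SimpleGraph V) (i j l k : V)
    (hij : G.Adj i j) (hlk : G.Adj l k) :
    (gasket G 2).Adj (Quotient.mk (gasketSetoid G 2) ![i, j])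
        (Quotient.mk (gasketSetoid G 2) ![l, k]) ↔
      (({i, j} : Finset V) ∩ {l, k}).card = 1 ∧
      ∀ a ∈ ({i, j, l, k} : Finset V), ∀ b ∈ ({i, j, l, k} : Finset V),
        a ≠ b → G.Adj a b := by
  constructor
  · rintro ⟨hne, u, v, hu, hv, hadj⟩
    have hK : ¬((i = l ∧ j = k) ∨ (i = k ∧ j = l)) := by
      rintro (⟨h1, h2⟩ | ⟨h1, h2⟩)
      · exact hne ((class2_iff G hlk ![i, j]).mpr (Or.inl (vec2_eq.mpr ⟨h1, h2⟩)))
      · exact hne ((class2_iff G hlk ![i, j]).mpr (Or.inr (vec2_eq.mpr ⟨h1, h2⟩)))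
    have hu' := (class2_iff G hij u).mp hu
    have hv' := (class2_iff G hlk v).mp hv
    rw [sierAdj2_iff] at hadj
    rcases hadj with hlink | ⟨h0, h1⟩
    · exact absurd ((hu.symm.trans ((mk2_eq G u v).mpr
        (Or.inr ((linking2_iff G u v).mpr hlink)))).trans hv) hne
    · rcases hu' with rfl | rfl <;> rcases hv' with rfl | rfl <;>
        simp only [Matrix.cons_val_zero, Matrix.cons_val_one, Matrix.head_cons] at h0 h1
      · -- i = l, Adj j k
        subst h0
        have hjk : j ≠ k := fun h => hK (Or.inl ⟨rfl, h⟩)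
        refine ⟨?_, ?_⟩
        · have : ({i, j} : Finset V) ∩ {i, k} = {i} := by
            ext a
            simp only [Finset.mem_inter, Finset.mem_insert, Finset.mem_singleton]
            constructor
            · rintro ⟨rfl | rfl, h | h⟩ <;> first | rfl | exact h | exact absurd h hjk
            · rintro rfl; exact ⟨Or.inl rfl, Or.inl rfl⟩
          rw [this, Finset.card_singleton]
        · have hset : ({i, j, i, k} : Finset V) = {i, j, k} := by
            ext a
            simp only [Finset.mem_insert, Finset.mem_singleton]
            tauto
          rw [hset]
          exact tri_all G hij hlk h1
      · -- i = k, Adj j l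
        subst h0
        have hjl : j ≠ l := fun h => hK (Or.inr ⟨rfl, h⟩)
        refine ⟨?_, ?_⟩
        · have : ({i, j} : Finset V) ∩ {l, i} = {i} := by
            ext a
            simp only [Finset.mem_inter, Finset.mem_insert, Finset.mem_singleton]
            constructor
            · rintro ⟨rfl | rfl, h | h⟩ <;> first | rfl | exact h | exact absurd h hjl
            · rintro rfl; exact ⟨Or.inl rfl, Or.inr rfl⟩
          rw [this, Finset.card_singleton]
        · have hset : ({i, j, l, i} : Finset V) = {i, j, l} := by
            ext a
            simp only [Finset.mem_insert, Finset.mem_singleton]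
            tauto
          rw [hset]
          exact tri_all G hij hlk.symm h1
      · -- j = l, Adj i k
        subst h0
        have hik : i ≠ k := fun h => hK (Or.inr ⟨h, rfl⟩)
        have hij' : i ≠ j := hij.ne
        refine ⟨?_, ?_⟩
        · have : ({i, j} : Finset V) ∩ {j, k} = {j} := by
            ext a
            simp only [Finset.mem_inter, Finset.mem_insert, Finset.mem_singleton]
            constructor
            · rintro ⟨rfl | rfl, h | h⟩ <;>
                first | rfl | exact h | exact absurd h hik | exact absurd h hij'
            · rintro rfl; exact ⟨Or.inr rfl, Or.inl rfl⟩
          rw [this, Finset.card_singleton]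
        · have hset : ({i, j, j, k} : Finset V) = {i, j, k} := by
            ext a
            simp only [Finset.mem_insert, Finset.mem_singleton]
            tauto
          rw [hset]
          exact tri_all G hij h1 hlk
      · -- j = k, Adj i l
        subst h0
        have hil : i ≠ l := fun h => hK (Or.inl ⟨h, rfl⟩)
        have hij' : i ≠ j := hij.ne
        refine ⟨?_, ?_⟩
        · have : ({i, j} : Finset V) ∩ {l, j} = {j} := by
            ext a
            simp only [Finset.mem_inter, Finset.mem_insert, Finset.mem_singleton]
            constructor
            · rintro ⟨rfl | rfl, h | h⟩ <;>
                first | rfl | exact h | exact absurd h hil | exact absurd h hij'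
            · rintro rfl; exact ⟨Or.inr rfl, Or.inr rfl⟩
          rw [this, Finset.card_singleton]
        · have hset : ({i, j, l, j} : Finset V) = {i, j, l} := by
            ext a
            simp only [Finset.mem_insert, Finset.mem_singleton]
            tauto
          rw [hset]
          exact tri_all G hij h1 hlk.symm
  · rintro ⟨hcard, htri⟩
    obtain ⟨a, ha⟩ := Finset.card_eq_one.mp hcard
    have hmem : ∀ x, x ∈ ({i, j} : Finset V) ∩ {l, k} ↔ x = a := by
      intro x; rw [ha]; simp
    have hamem := (hmem a).mpr rfl
    simp only [Finset.mem_inter, Finset.mem_insert, Finset.mem_singleton] at hamem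
    obtain ⟨ha1, ha2⟩ := hamem
    rcases ha1 with h1 | h1
    · obtain rfl := h1.symm
      rcases ha2 with rfl | h2
      · -- a = i = l
        have hjk : j ≠ k := by
          intro h
          have : j = i := (hmem j).mp (by simp [h])
          exact hij.ne' this
        have hAdj : G.Adj j k := htri j (by simp) k (by simp) hjk
        refine ⟨?_, ![i, j], ![i, k], rfl, rfl, (sierAdj2_iff G _ _).mpr
          (Or.inr ⟨by simp, by simpa using hAdj⟩)⟩
        intro h
        rcases (class2_iff G hlk ![i, j]).mp h with h' | h' <;> rw [vec2_eq] at h'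
        · exact hjk h'.2
        · exact hlk.ne h'.1
      · -- a = i = k
        subst h2
        have hjl : j ≠ l := by
          intro h
          have : j = i := (hmem j).mp (by simp [h])
          exact hij.ne' this
        have hAdj : G.Adj j l := htri j (by simp) l (by simp) hjl
        refine ⟨?_, ![i, j], ![i, l], rfl,
          (class2_iff G hlk ![i, l]).mpr (Or.inr rfl),
          (sierAdj2_iff G _ _).mpr (Or.inr ⟨by simp, by simpa using hAdj⟩)⟩
        intro h
        rcases (class2_iff G hlk ![i, j]).mp h with h' | h' <;> rw [vec2_eq] at h'
        · exact hij.ne' h'.2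
        · exact hjl h'.2
    · obtain rfl := h1.symm
      rcases ha2 with rfl | h2
      · -- a = j = l
        have hik : i ≠ k := by
          intro h
          have : i = j := (hmem i).mp (by simp [h])
          exact hij.ne this
        have hAdj : G.Adj i k := htri i (by simp) k (by simp) hik
        refine ⟨?_, ![j, i], ![j, k], (class2_iff G hij ![j, i]).mpr (Or.inr rfl),
          rfl, (sierAdj2_iff G _ _).mpr (Or.inr ⟨by simp, by simpa using hAdj⟩)⟩
        intro h
        rcases (class2_iff G hlk ![i, j]).mp h with h' | h' <;> rw [vec2_eq] at h'
        · exact hij.ne h'.1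
        · exact hik h'.1
      · -- a = j = k
        subst h2
        have hil : i ≠ l := by
          intro h
          have : i = j := (hmem i).mp (by simp [h])
          exact hij.ne this
        have hAdj : G.Adj i l := htri i (by simp) l (by simp) hil
        refine ⟨?_, ![j, i], ![j, l], (class2_iff G hij ![j, i]).mpr (Or.inr rfl),
          (class2_iff G hlk ![j, l]).mpr (Or.inr rfl),
          (sierAdj2_iff G _ _).mpr (Or.inr ⟨by simp, by simpa using hAdj⟩)⟩
        intro h
        rcases (class2_iff G hlk ![i, j]).mp h with h' | h' <;> rw [vec2_eq] at h'
        · exact hil h'.1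
        · exact hij.ne h'.1
end

section
/- If C is a clique of S[G,t] with |C| ≥ 4, then C is entirely contained in one of the copies S_i[G,t] of S[G,t−1], for some vertex i of G. -/
variable {V : Type*}

section SgAux

variable {G : SimpleGraph V} {t : ℕ}

/-- Two words agree on all but (possibly) the last coordinate. -/
def sgEqp (t : ℕ) (u v : Fin t → V) : Prop := ∀ k : Fin t, (k : ℕ) + 1 < t → u k = v k

theorem sgEqp_refl (t : ℕ) (u : Fin t → V) : sgEqp t u u := fun _ _ => rfl

theorem sgEqp_symm {u v : Fin t → V} (h : sgEqp t u v) : sgEqp t v u :=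
  fun k hk => (h k hk).symm

theorem sgEqp_trans {u v w : Fin t → V} (h1 : sgEqp t u v) (h2 : sgEqp t v w) :
    sgEqp t u w := fun k hk => (h1 k hk).trans (h2 k hk)

theorem sgLinking_symm {u v : Fin t → V} (h : linking G t u v) : linking G t v u := by
  obtain ⟨p, i, hip, hlt, hb, ha, htl⟩ := h
  exact ⟨p, i, hip, hlt, fun j hj => (hb j hj).symm, ha.symm,
    fun j hj => ⟨(htl j hj).2, (htl j hj).1⟩⟩

theorem sgLinking_fun {u v w : Fin t → V}
    (h1 : linking G t u v) (h2 : linking G t u w) : v = w := by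
  obtain ⟨p, i, rfl, hlt, hb, ha, htl⟩ := h1
  obtain ⟨q, i', rfl, hlt', hb', ha', htl'⟩ := h2
  rcases lt_trichotomy i i' with hii | hii | hii
  · exfalso
    have hj : i' < (⟨i'.val + 1, hlt'⟩ : Fin t) := by simp [Fin.lt_def]
    have e1 := (htl i' hii).1
    have e2 := (htl ⟨i'.val + 1, hlt'⟩ (lt_trans hii hj)).1
    have e3 := (htl' ⟨i'.val + 1, hlt'⟩ hj).1
    rw [e1, ← e3, e2] at ha'
    exact G.irrefl ha'
  · subst hii
    funext j
    rcases lt_trichotomy j i with hj | hj | hj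
    · exact (hb j hj).symm.trans (hb' j hj)
    · subst hj
      have hjlt : j < (⟨j.val + 1, hlt⟩ : Fin t) := by simp [Fin.lt_def]
      exact ((htl ⟨j.val + 1, hlt⟩ hjlt).1).symm.trans (htl' ⟨j.val + 1, hlt⟩ hjlt).1
    · exact ((htl j hj).2).trans ((htl' j hj).2).symm
  · exfalso
    have hj : i < (⟨i.val + 1, hlt⟩ : Fin t) := by simp [Fin.lt_def]
    have e1 := (htl' i hii).1
    have e2 := (htl' ⟨i.val + 1, hlt⟩ (lt_trans hii hj)).1
    have e3 := (htl ⟨i.val + 1, hlt⟩ hj).1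
    rw [e1, ← e3, e2] at ha
    exact G.irrefl ha

theorem sgMk_eq_iff {u v : Fin t → V} :
    Quotient.mk (gasketSetoid G t) u = Quotient.mk (gasketSetoid G t) v ↔
      u = v ∨ linking G t u v := by
  constructor
  · intro h
    have h' : Relation.EqvGen (linking G t) u v := Quotient.exact h
    clear h
    induction h' with
    | rel a b hab => exact Or.inr hab
    | refl a => exact Or.inl rfl
    | symm a b hab ih =>
      rcases ih with h | h
      · exact Or.inl h.symm
      · exact Or.inr (sgLinking_symm h)
    | trans a b c h1 h2 ih1 ih2 =>
      rcases ih1 with rfl | h1'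
      · exact ih2
      · rcases ih2 with rfl | h2'
        · exact Or.inr h1'
        · exact Or.inl (sgLinking_fun (sgLinking_symm h1') h2')
  · rintro (rfl | h)
    · rfl
    · exact Quotient.sound (Relation.EqvGen.rel _ _ h)

theorem sgRep_dichotomy {u v w : Fin t → V} (hl : linking G t u v)
    (h : Quotient.mk (gasketSetoid G t) w = Quotient.mk (gasketSetoid G t) u) :
    w = u ∨ w = v := by
  rcases sgMk_eq_iff.mp h with h' | h'
  · exact Or.inl h'
  · exact Or.inr (sgLinking_fun (sgLinking_symm h') hl)

theorem sgLinking_not_eqp {u v : Fin t → V} (h : linking G t u v) : ¬ sgEqp t u v := by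
  obtain ⟨p, i, rfl, hlt, hb, ha, htl⟩ := h
  intro he
  exact ha.ne (he i hlt)

theorem sgAdj_exists_reps {x y : Quotient (gasketSetoid G t)}
    (h : (gasket G t).Adj x y) :
    ∃ u v : Fin t → V, Quotient.mk (gasketSetoid G t) u = x ∧
      Quotient.mk (gasketSetoid G t) v = y ∧ sgEqp t u v := by
  obtain ⟨hne, u, v, hu, hv, i, hb, ha, htl⟩ :
      x ≠ y ∧ ∃ u v, Quotient.mk (gasketSetoid G t) u = x ∧
        Quotient.mk (gasketSetoid G t) v = y ∧ sierAdj G t u v := h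
  refine ⟨u, v, hu, hv, ?_⟩
  rcases Nat.lt_or_ge ((i : ℕ) + 1) t with hit | hit
  · exfalso
    have hl : linking G t u v := ⟨i.val, i, rfl, hit, hb, ha, htl⟩
    have hmk : Quotient.mk (gasketSetoid G t) u = Quotient.mk (gasketSetoid G t) v :=
      sgMk_eq_iff.mpr (Or.inr hl)
    exact hne (by rw [← hu, ← hv]; exact hmk)
  · intro k hk
    exact hb k (Fin.lt_def.mpr (by omega))

theorem sgPair_determined {u1 v1 u2 v2 : Fin t → V}
    (h1 : linking G t u1 v1) (h2 : linking G t u2 v2)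
    (hu : sgEqp t u1 u2) (hv : sgEqp t v1 v2) : u1 = u2 := by
  obtain ⟨p, i, rfl, hlt, hb, ha, htl⟩ := h1
  obtain ⟨q, i', rfl, hlt', hb', ha', htl'⟩ := h2
  have hii : i = i' := by
    rcases lt_trichotomy i i' with h | h | h
    · exact absurd ((hu i hlt).trans ((hb' i h).trans (hv i hlt).symm)) ha.ne
    · exact h
    · exact absurd ((hu i' hlt').symm.trans ((hb i' h).trans (hv i' hlt'))) ha'.ne
  subst hii
  funext j
  rcases Nat.lt_or_ge ((j : ℕ) + 1) t with hj | hj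
  · exact hu j hj
  · have hij : i < j := Fin.lt_def.mpr (by omega)
    rw [(htl j hij).1, (htl' j hij).1]
    exact hv i hlt

theorem sgPair_mk_eq {p p' q q' : Fin t → V}
    (hp : linking G t p p') (hq : linking G t q q')
    (h : (sgEqp t p q ∧ sgEqp t p' q') ∨ (sgEqp t p q' ∧ sgEqp t p' q)) :
    Quotient.mk (gasketSetoid G t) p = Quotient.mk (gasketSetoid G t) q := by
  rcases h with ⟨h1, h2⟩ | ⟨h1, h2⟩
  · rw [sgPair_determined hp hq h1 h2]
  · rw [sgPair_determined hp (sgLinking_symm hq) h1 h2]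
    exact sgMk_eq_iff.mpr (Or.inr (sgLinking_symm hq))

theorem sgPairing {p p' a b : Fin t → V} (hab : ¬ sgEqp t a b)
    (h1 : sgEqp t p a ∨ sgEqp t p' a) (h2 : sgEqp t p b ∨ sgEqp t p' b) :
    (sgEqp t p a ∧ sgEqp t p' b) ∨ (sgEqp t p b ∧ sgEqp t p' a) := by
  rcases h1 with h1 | h1 <;> rcases h2 with h2 | h2
  · exact absurd (sgEqp_trans (sgEqp_symm h1) h2) hab
  · exact Or.inl ⟨h1, h2⟩
  · exact Or.inr ⟨h2, h1⟩
  · exact absurd (sgEqp_trans (sgEqp_symm h1) h2) hab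

theorem sgAdj_prefix {x y : Quotient (gasketSetoid G t)} {w w' u v : Fin t → V}
    (h : (gasket G t).Adj x y) (hww : linking G t w w') (huv : linking G t u v)
    (hw : Quotient.mk (gasketSetoid G t) w = x) (hu : Quotient.mk (gasketSetoid G t) u = y) :
    ∃ s s' : Fin t → V, (s = w ∨ s = w') ∧ (s' = u ∨ s' = v) ∧ sgEqp t s s' := by
  obtain ⟨a, b, hax, hby, hab⟩ := sgAdj_exists_reps h
  exact ⟨a, b, sgRep_dichotomy hww (hax.trans hw.symm),
    sgRep_dichotomy huv (hby.trans hu.symm), hab⟩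

theorem sgCore {C : Finset (Quotient (gasketSetoid G t))}
    (hC : (gasket G t).IsClique (C : Set (Quotient (gasketSetoid G t))))
    (hcard : 4 ≤ C.card)
    (Hpairs : ∀ x ∈ C, ∃ a b : Fin t → V, Quotient.mk (gasketSetoid G t) a = x ∧
      Quotient.mk (gasketSetoid G t) b = x ∧ linking G t a b)
    {x1 x2 : Quotient (gasketSetoid G t)} (hx1 : x1 ∈ C) (hx2 : x2 ∈ C) (hne : x1 ≠ x2)
    {u1 v1 u2 v2 : Fin t → V}
    (hu1 : Quotient.mk (gasketSetoid G t) u1 = x1)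
    (hv1 : Quotient.mk (gasketSetoid G t) v1 = x1)
    (hl1 : linking G t u1 v1)
    (hu2 : Quotient.mk (gasketSetoid G t) u2 = x2)
    (hv2 : Quotient.mk (gasketSetoid G t) v2 = x2)
    (hl2 : linking G t u2 v2)
    (h12 : sgEqp t u1 u2) :
    ∀ y ∈ C, ∃ r : Fin t → V, Quotient.mk (gasketSetoid G t) r = y ∧ sgEqp t r u1 := by
  classical
  have hab1 : ¬ sgEqp t u1 v1 := sgLinking_not_eqp hl1
  have hab2 : ¬ sgEqp t u2 v2 := sgLinking_not_eqp hl2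
  have hv1v2 : ¬ sgEqp t v1 v2 := fun h =>
    hne (by rw [← hu1, ← hu2, sgPair_determined hl1 hl2 h12 h])
  intro y hy
  by_cases hy1 : y = x1
  · exact ⟨u1, hy1 ▸ hu1, sgEqp_refl t u1⟩
  by_cases hy2 : y = x2
  · exact ⟨u2, hy2 ▸ hu2, sgEqp_symm h12⟩
  by_contra hno
  push_neg at hno
  obtain ⟨w, w', hw, hw', hlw⟩ := Hpairs y hy
  have hadj1 : (gasket G t).Adj y x1 :=
    hC (Finset.mem_coe.mpr hy) (Finset.mem_coe.mpr hx1) hy1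
  have hadj2 : (gasket G t).Adj y x2 :=
    hC (Finset.mem_coe.mpr hy) (Finset.mem_coe.mpr hx2) hy2
  have Qv1 : sgEqp t w v1 ∨ sgEqp t w' v1 := by
    obtain ⟨s, s', hs, hs', hss⟩ := sgAdj_prefix hadj1 hlw hl1 hw hu1
    rcases hs' with rfl | rfl
    · exfalso
      rcases hs with rfl | rfl
      · exact hno _ hw hss
      · exact hno _ hw' hss
    · rcases hs with rfl | rfl
      · exact Or.inl hss
      · exact Or.inr hss
  have Qv2 : sgEqp t w v2 ∨ sgEqp t w' v2 := by
    obtain ⟨s, s', hs, hs', hss⟩ := sgAdj_prefix hadj2 hlw hl2 hw hu2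
    rcases hs' with rfl | rfl
    · exfalso
      have hsu1 : sgEqp t s u1 := sgEqp_trans hss (sgEqp_symm h12)
      rcases hs with rfl | rfl
      · exact hno _ hw hsu1
      · exact hno _ hw' hsu1
    · rcases hs with rfl | rfl
      · exact Or.inl hss
      · exact Or.inr hss
  have hyor := sgPairing hv1v2 Qv1 Qv2
  have hzex : ∃ z ∈ C, z ≠ x1 ∧ z ≠ x2 ∧ z ≠ y := by
    by_contra hzc
    push_neg at hzc
    have hsub : C ⊆ {x1, x2, y} := by
      intro z hz
      simp only [Finset.mem_insert, Finset.mem_singleton]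
      by_cases h1 : z = x1
      · exact Or.inl h1
      · by_cases h2 : z = x2
        · exact Or.inr (Or.inl h2)
        · exact Or.inr (Or.inr (hzc z hz h1 h2))
    have hle := Finset.card_le_card hsub
    have h3 : ({x1, x2, y} : Finset (Quotient (gasketSetoid G t))).card ≤ 3 := by
      have i1 := Finset.card_insert_le x1 ({x2, y} : Finset (Quotient (gasketSetoid G t)))
      have i2 := Finset.card_insert_le x2 ({y} : Finset (Quotient (gasketSetoid G t)))
      have i3 : ({y} : Finset (Quotient (gasketSetoid G t))).card = 1 :=
        Finset.card_singleton y
      omega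
    omega
  obtain ⟨z, hz, hz1, hz2, hzy⟩ := hzex
  obtain ⟨p, p', hp, hp', hlp⟩ := Hpairs z hz
  have hadjz1 : (gasket G t).Adj z x1 :=
    hC (Finset.mem_coe.mpr hz) (Finset.mem_coe.mpr hx1) hz1
  have hadjz2 : (gasket G t).Adj z x2 :=
    hC (Finset.mem_coe.mpr hz) (Finset.mem_coe.mpr hx2) hz2
  have hadjzy : (gasket G t).Adj z y :=
    hC (Finset.mem_coe.mpr hz) (Finset.mem_coe.mpr hy) hzy
  have H1 : (sgEqp t p u1 ∨ sgEqp t p' u1) ∨ (sgEqp t p v1 ∨ sgEqp t p' v1) := by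
    obtain ⟨s, s', hs, hs', hss⟩ := sgAdj_prefix hadjz1 hlp hl1 hp hu1
    rcases hs' with rfl | rfl
    · rcases hs with rfl | rfl
      · exact Or.inl (Or.inl hss)
      · exact Or.inl (Or.inr hss)
    · rcases hs with rfl | rfl
      · exact Or.inr (Or.inl hss)
      · exact Or.inr (Or.inr hss)
  have H2 : (sgEqp t p u2 ∨ sgEqp t p' u2) ∨ (sgEqp t p v2 ∨ sgEqp t p' v2) := by
    obtain ⟨s, s', hs, hs', hss⟩ := sgAdj_prefix hadjz2 hlp hl2 hp hu2
    rcases hs' with rfl | rfl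
    · rcases hs with rfl | rfl
      · exact Or.inl (Or.inl hss)
      · exact Or.inl (Or.inr hss)
    · rcases hs with rfl | rfl
      · exact Or.inr (Or.inl hss)
      · exact Or.inr (Or.inr hss)
  have H3 : (sgEqp t p w ∨ sgEqp t p' w) ∨ (sgEqp t p w' ∨ sgEqp t p' w') := by
    obtain ⟨s, s', hs, hs', hss⟩ := sgAdj_prefix hadjzy hlp hlw hp hw
    rcases hs' with rfl | rfl
    · rcases hs with rfl | rfl
      · exact Or.inl (Or.inl hss)
      · exact Or.inl (Or.inr hss)
    · rcases hs with rfl | rfl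
      · exact Or.inr (Or.inl hss)
      · exact Or.inr (Or.inr hss)
  by_cases hQu1 : sgEqp t p u1 ∨ sgEqp t p' u1
  · have hQv : (sgEqp t p v1 ∨ sgEqp t p' v1) ∨ (sgEqp t p v2 ∨ sgEqp t p' v2) := by
      rcases hyor with ⟨hwv, hwv'⟩ | ⟨hwv, hwv'⟩
      · rcases H3 with h | h
        · exact Or.inl (h.imp (fun hh => sgEqp_trans hh hwv) (fun hh => sgEqp_trans hh hwv))
        · exact Or.inr (h.imp (fun hh => sgEqp_trans hh hwv') (fun hh => sgEqp_trans hh hwv'))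
      · rcases H3 with h | h
        · exact Or.inr (h.imp (fun hh => sgEqp_trans hh hwv) (fun hh => sgEqp_trans hh hwv))
        · exact Or.inl (h.imp (fun hh => sgEqp_trans hh hwv') (fun hh => sgEqp_trans hh hwv'))
    rcases hQv with hQv1 | hQv2
    · exact hz1 (by rw [← hp, ← hu1]; exact sgPair_mk_eq hlp hl1 (sgPairing hab1 hQu1 hQv1))
    · have hQu2 : sgEqp t p u2 ∨ sgEqp t p' u2 :=
        hQu1.imp (fun h => sgEqp_trans h h12) (fun h => sgEqp_trans h h12)
      exact hz2 (by rw [← hp, ← hu2]; exact sgPair_mk_eq hlp hl2 (sgPairing hab2 hQu2 hQv2))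
  · push_neg at hQu1
    have hQv1 : sgEqp t p v1 ∨ sgEqp t p' v1 := by
      rcases H1 with h | h
      · exact absurd h (by push_neg; exact hQu1)
      · exact h
    have hQv2 : sgEqp t p v2 ∨ sgEqp t p' v2 := by
      rcases H2 with h | h
      · exact absurd (h.imp (fun hh => sgEqp_trans hh (sgEqp_symm h12))
          (fun hh => sgEqp_trans hh (sgEqp_symm h12))) (by push_neg; exact hQu1)
      · exact h
    have habw : ¬ sgEqp t w w' := sgLinking_not_eqp hlw
    rcases hyor with ⟨hwv, hwv'⟩ | ⟨hwv, hwv'⟩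
    · have hQw : sgEqp t p w ∨ sgEqp t p' w :=
        hQv1.imp (fun h => sgEqp_trans h (sgEqp_symm hwv)) (fun h => sgEqp_trans h (sgEqp_symm hwv))
      have hQw' : sgEqp t p w' ∨ sgEqp t p' w' :=
        hQv2.imp (fun h => sgEqp_trans h (sgEqp_symm hwv')) (fun h => sgEqp_trans h (sgEqp_symm hwv'))
      exact hzy (by rw [← hp, ← hw]; exact sgPair_mk_eq hlp hlw (sgPairing habw hQw hQw'))
    · have hQw : sgEqp t p w ∨ sgEqp t p' w :=
        hQv2.imp (fun h => sgEqp_trans h (sgEqp_symm hwv)) (fun h => sgEqp_trans h (sgEqp_symm hwv))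
      have hQw' : sgEqp t p w' ∨ sgEqp t p' w' :=
        hQv1.imp (fun h => sgEqp_trans h (sgEqp_symm hwv')) (fun h => sgEqp_trans h (sgEqp_symm hwv'))
      exact hzy (by rw [← hp, ← hw]; exact sgPair_mk_eq hlp hlw (sgPairing habw hQw hQw'))

end SgAux

/-- every clique of `S[G,t]` with at least `4` vertices lies entirely in
one of the copies `S_i[G,t]` of `S[G,t−1]`, i.e. all its vertices have representatives
whose first letter is `i`. -/
theorem stmt_10 (G : SimpleGraph V) (t : ℕ) (ht : 2 ≤ t)
    (C : Finset (Quotient (gasketSetoid G t)))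
    (hC : (gasket G t).IsClique (C : Set (Quotient (gasketSetoid G t))))
    (hcard : 4 ≤ C.card) :
    ∃ i : V, ∀ x ∈ C, ∃ u : Fin t → V,
      Quotient.mk (gasketSetoid G t) u = x ∧ u ⟨0, by omega⟩ = i := by
  classical
  have ht0 : 0 < t := by omega
  by_cases hsmall : ∃ x ∈ C, ∀ a b : Fin t → V,
      Quotient.mk (gasketSetoid G t) a = x → Quotient.mk (gasketSetoid G t) b = x → sgEqp t a b
  · obtain ⟨x, hx, hsm⟩ := hsmall
    obtain ⟨a, ha⟩ := Quotient.exists_rep x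
    refine ⟨a ⟨0, ht0⟩, ?_⟩
    intro y hy
    by_cases hyx : y = x
    · exact ⟨a, hyx ▸ ha, rfl⟩
    · have hadj : (gasket G t).Adj x y :=
        hC (Finset.mem_coe.mpr hx) (Finset.mem_coe.mpr hy) (fun h => hyx h.symm)
      obtain ⟨u, v, hu, hv, huv⟩ := sgAdj_exists_reps hadj
      have h1 : sgEqp t u a := hsm u a hu ha
      have h2 : sgEqp t v a := sgEqp_trans (sgEqp_symm huv) h1
      exact ⟨v, hv, h2 ⟨0, ht0⟩ (by simp only [Fin.val_mk]; omega)⟩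
  · push_neg at hsmall
    have Hpairs : ∀ x ∈ C, ∃ a b : Fin t → V, Quotient.mk (gasketSetoid G t) a = x ∧
        Quotient.mk (gasketSetoid G t) b = x ∧ linking G t a b := by
      intro x hx
      obtain ⟨a, b, ha, hb, hab⟩ := hsmall x hx
      rcases sgMk_eq_iff.mp (ha.trans hb.symm) with h | h
      · exact absurd (h ▸ sgEqp_refl t a) hab
      · exact ⟨a, b, ha, hb, h⟩
    obtain ⟨x1, hx1, x2, hx2, hne⟩ := Finset.one_lt_card.mp (by omega : 1 < C.card)
    obtain ⟨u1, v1, hu1, hv1, hl1⟩ := Hpairs x1 hx1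
    obtain ⟨u2, v2, hu2, hv2, hl2⟩ := Hpairs x2 hx2
    have hadj12 : (gasket G t).Adj x1 x2 :=
      hC (Finset.mem_coe.mpr hx1) (Finset.mem_coe.mpr hx2) hne
    obtain ⟨s, s', hs, hs', hss⟩ := sgAdj_prefix hadj12 hl1 hl2 hu1 hu2
    have key : ∃ r0 : Fin t → V, ∀ y ∈ C, ∃ r : Fin t → V,
        Quotient.mk (gasketSetoid G t) r = y ∧ sgEqp t r r0 := by
      rcases hs with rfl | rfl <;> rcases hs' with rfl | rfl
      · exact ⟨s, sgCore hC hcard Hpairs hx1 hx2 hne hu1 hv1 hl1 hu2 hv2 hl2 hss⟩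
      · exact ⟨s, sgCore hC hcard Hpairs hx1 hx2 hne hu1 hv1 hl1 hv2 hu2 (sgLinking_symm hl2) hss⟩
      · exact ⟨s, sgCore hC hcard Hpairs hx1 hx2 hne hv1 hu1 (sgLinking_symm hl1) hu2 hv2 hl2 hss⟩
      · exact ⟨s, sgCore hC hcard Hpairs hx1 hx2 hne hv1 hu1 (sgLinking_symm hl1) hv2 hu2 (sgLinking_symm hl2) hss⟩
    obtain ⟨r0, hkey⟩ := key
    refine ⟨r0 ⟨0, ht0⟩, fun y hy => ?_⟩
    obtain ⟨r, hr, hre⟩ := hkey y hy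
    exact ⟨r, hr, hre ⟨0, ht0⟩ (by simp only [Fin.val_mk]; omega)⟩
end

section
/- If χ(G) = 2, then χ(S[G,t]) = 2 for every positive integer t; equivalently, if G is bipartite then S[G,t] is bipartite. -/
variable {V : Type*}

/-- The 2-coloring value of a word: sum (in `ℤ/2`) of the colors of its last
two letters (just the color of the unique letter when `t = 1`). -/
def fcol (c : V → ZMod 2) {t : ℕ} (u : Fin t → V) : ZMod 2 :=
  if h : t = 0 then 0 else
    c (u ⟨t - 1, by omega⟩) + if h2 : 2 ≤ t then c (u ⟨t - 2, by omega⟩) else 0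

lemma fcol_linking (G : SimpleGraph V) {t : ℕ} (c : V → ZMod 2) {u v : Fin t → V}
    (h : linking G t u v) : fcol c u = fcol c v := by
  obtain ⟨p, i, hip, hlt, hpre, hadj, hsuf⟩ := h
  have ht0 : t ≠ 0 := by omega
  have ht2 : 2 ≤ t := by omega
  have hzero : ∀ x : ZMod 2, x + x = 0 := by decide
  have ha : i < (⟨t - 1, by omega⟩ : Fin t) := by
    simp only [Fin.lt_def]; omega
  have hua := hsuf _ ha
  simp only [fcol, dif_neg ht0, dif_pos ht2]
  by_cases hb : i.val = t - 2
  · have hib : (⟨t - 2, by omega⟩ : Fin t) = i := by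
      apply Fin.ext; simp [hb]
    rw [hib, hua.1, hua.2, add_comm]
  · have hb' : i < (⟨t - 2, by omega⟩ : Fin t) := by
      simp only [Fin.lt_def]; omega
    have hub := hsuf _ hb'
    rw [hua.1, hua.2, hub.1, hub.2, hzero, hzero]

lemma fcol_top (G : SimpleGraph V) {t : ℕ} (c : V → ZMod 2)
    (hc : ∀ x y, G.Adj x y → c x ≠ c y) {u v : Fin t → V} {i : Fin t}
    (hit : i.val + 1 = t) (hpre : ∀ j, j < i → u j = v j)
    (hadj : G.Adj (u i) (v i)) : fcol c u ≠ fcol c v := by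
  have ht0 : t ≠ 0 := by omega
  have hi1 : (⟨t - 1, by omega⟩ : Fin t) = i := by apply Fin.ext; simp; omega
  simp only [fcol, dif_neg ht0, hi1]
  by_cases ht2 : 2 ≤ t
  · have hb : (⟨t - 2, by omega⟩ : Fin t) < i := by simp only [Fin.lt_def]; omega
    have hub := hpre _ hb
    simp only [dif_pos ht2, hub]
    intro h
    exact hc _ _ hadj (add_right_cancel h)
  · simpa [dif_neg ht2] using hc _ _ hadj

lemma fcol_eqvGen (G : SimpleGraph V) {t : ℕ} (c : V → ZMod 2) {u v : Fin t → V}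
    (h : Relation.EqvGen (linking G t) u v) : fcol c u = fcol c v := by
  induction h with
  | rel a b hab => exact fcol_linking G c hab
  | refl => rfl
  | symm _ _ _ ih => exact ih.symm
  | trans _ _ _ _ _ ih1 ih2 => exact ih1.trans ih2

/-- if `χ(G) = 2` then `χ(S[G,t]) = 2` for every positive integer `t`. -/
theorem stmt_17 (G : SimpleGraph V) (hG : G.chromaticNumber = 2) (t : ℕ) (ht : 1 ≤ t) :
    (gasket G t).chromaticNumber = 2 := by
  classical
  -- extract a proper 2-coloring of `G` with values in `ZMod 2`
  have hcol : G.Colorable 2 := by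
    rw [← SimpleGraph.chromaticNumber_le_iff_colorable, hG]; norm_num
  obtain ⟨C⟩ := hcol
  set c : V → ZMod 2 := fun x => if C x = 0 then 0 else 1 with hc_def
  have hc : ∀ x y, G.Adj x y → c x ≠ c y := by
    intro x y hxy
    have hne := C.valid hxy
    have key : ∀ a b : Fin 2, a ≠ b →
        (if a = 0 then (0 : ZMod 2) else 1) ≠ (if b = 0 then 0 else 1) := by decide
    exact key _ _ hne
  -- the induced coloring of the gasket
  have hlift : ∀ a b : Fin t → V, (gasketSetoid G t).r a b → fcol c a = fcol c b :=
    fun a b h => fcol_eqvGen G c h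
  set F : Quotient (gasketSetoid G t) → ZMod 2 := Quotient.lift (fcol c) hlift with hF
  have hFvalid : ∀ {x y}, (gasket G t).Adj x y → F x ≠ F y := by
    rintro x y ⟨hne, u, v, hu, hv, i, hpre, hadj, hsuf⟩
    subst hu; subst hv
    by_cases hi : i.val + 1 < t
    · exfalso
      exact hne (Quotient.sound (Relation.EqvGen.rel _ _
        ⟨i.val, i, rfl, hi, hpre, hadj, hsuf⟩))
    · have hit : i.val + 1 = t := by have := i.isLt; omega
      exact fcol_top G c hc hit hpre hadj
  have CG : (gasket G t).Coloring (ZMod 2) := SimpleGraph.Coloring.mk F hFvalid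
  have hcol2 : (gasket G t).Colorable 2 := by
    have := CG.colorable
    rwa [ZMod.card] at this
  -- `G` has at least one edge
  have hGedge : ∃ a b, G.Adj a b := by
    by_contra h
    push_neg at h
    have hc1 : G.Colorable 1 :=
      ⟨SimpleGraph.Coloring.mk (fun _ => 0) (fun {x y} hxy => absurd hxy (h x y))⟩
    have := hc1.chromaticNumber_le
    rw [hG] at this
    norm_num at this
  obtain ⟨a, b, hab⟩ := hGedge
  -- a top-level edge of the gasket
  set u : Fin t → V := fun _ => a with hu_def
  set v : Fin t → V := fun k => if k.val + 1 = t then b else a with hv_def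
  have hi : t - 1 < t := by omega
  set i : Fin t := ⟨t - 1, hi⟩ with hi_def
  have hit : i.val + 1 = t := by simp [hi_def]; omega
  have hpre : ∀ j, j < i → u j = v j := by
    intro j hj
    have : j.val + 1 ≠ t := by
      simp only [hi_def, Fin.lt_def] at hj; omega
    simp [hu_def, hv_def, this]
  have hui : u i = a := rfl
  have hvi : v i = b := by simp [hv_def, hit]
  have hadj : G.Adj (u i) (v i) := by rw [hui, hvi]; exact hab
  have hsuf : ∀ j, i < j → u j = v i ∧ v j = u i := by
    intro j hj
    exfalso
    have := j.isLt
    simp only [hi_def, Fin.lt_def] at hj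
    omega
  have hsadj : sierAdj G t u v := ⟨i, hpre, hadj, hsuf⟩
  have hfne : fcol c u ≠ fcol c v := fcol_top G c hc hit hpre hadj
  have hqne : Quotient.mk (gasketSetoid G t) u ≠ Quotient.mk (gasketSetoid G t) v := by
    intro h
    exact hfne (hlift u v (Quotient.exact h))
  have hgadj : (gasket G t).Adj (Quotient.mk (gasketSetoid G t) u)
      (Quotient.mk (gasketSetoid G t) v) := ⟨hqne, u, v, rfl, rfl, hsadj⟩
  -- conclude
  refine le_antisymm ?_ ?_
  · have := hcol2.chromaticNumber_le
    exact_mod_cast this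
  · by_contra h
    push_neg at h
    have h1 : (gasket G t).chromaticNumber ≤ 1 := Order.le_of_lt_succ h
    rw [show ((1 : ℕ∞)) = ((1 : ℕ) : ℕ∞) by norm_num,
      SimpleGraph.chromaticNumber_le_iff_colorable] at h1
    obtain ⟨C1⟩ := h1
    exact C1.valid hgadj (Subsingleton.elim _ _)
end
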